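/- Let F be a field and d ≥ 1. Let Q_1, …, Q_{d+2} and R_1, …, R_{d+2} be two tuples of nonzero row vectors in F^{1×(d+1)}, each tuple in general position, meaning that every d+1 of the vectors in the tuple are linearly independent, and for each i let K_{R_i} ∈ F^{(d+1)×d} be a matrix whose columns form a basis of { w ∈ F^{(d+1)×1} : R_i · w = 0 }. Then the d(d+2) linear equations on M ∈ Mat_{(d+1)×(d+1)}(F) given by the entries of Q_i · M · K_{R_i} = 0 for i = 1, …, d+2 are linearly independent; equivalently, the linear map Mat_{(d+1)×(d+1)}(F) → (F^{1×d})^{d+2}, M ↦ (Q_1 M K_{R_1}, …, Q_{d+2} M K_{R_{d+2}}), is surjective, so its kernel has dimension (d+1)² − d(d+2) = 1. -/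

import Mathlib

open Matrix

section GeiserAux

variable {F : Type*} [Field F]

/-- A linear functional vanishing on the kernel of a nonzero functional is a scalar
multiple of it (stated via dot products). -/
lemma geiser_dot_factor {n : Type*} [Fintype n] [DecidableEq n]
    (r a : n → F) (hr : r ≠ 0)
    (h : ∀ w, r ⬝ᵥ w = 0 → a ⬝ᵥ w = 0) : ∃ c : F, a = c • r := by
  obtain ⟨j, hj⟩ : ∃ j, r j ≠ 0 := by
    by_contra h'; push_neg at h'; exact hr (funext h')
  set w0 : n → F := (r j)⁻¹ • (Pi.single j 1 : n → F) with hw0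
  have hrw0 : r ⬝ᵥ w0 = 1 := by
    simp [hw0, dotProduct_smul, dotProduct_single, hj]
  refine ⟨a ⬝ᵥ w0, ?_⟩
  funext k
  have hk := h ((Pi.single k 1 : n → F) - (r k) • w0) (by
    simp [dotProduct_sub, dotProduct_smul, dotProduct_single, hrw0])
  simp only [dotProduct_sub, dotProduct_smul, dotProduct_single, smul_eq_mul, hrw0,
    sub_eq_zero, mul_one] at hk
  simp [hk, Pi.smul_apply, smul_eq_mul, mul_comm]

/-- From `d+2` vectors in `F^{d+1}` in general position, the first `d+1` form a basis in
which the last vector has all coordinates nonzero. -/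
lemma geiser_gen_pos_basis {d : ℕ}
    (v : Fin (d + 2) → (Fin (d + 1) → F))
    (hgen : ∀ s : Finset (Fin (d + 2)), s.card = d + 1 →
      LinearIndependent F (fun i : s => v (i : Fin (d + 2)))) :
    ∃ b : Module.Basis (Fin (d + 1)) F (Fin (d + 1) → F),
      (∀ i, b i = v i.castSucc) ∧
      ∀ i, b.repr (v (Fin.last (d + 1))) i ≠ 0 := by
  classical
  set l : Fin (d + 2) := Fin.last (d + 1) with hl
  have hcardU : (Finset.univ : Finset (Fin (d + 2))).card = d + 2 := by simp
  have hs0card : ((Finset.univ : Finset (Fin (d + 2))).erase l).card = d + 1 := by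
    rw [Finset.card_erase_of_mem (Finset.mem_univ _), hcardU]; omega
  have li0 := hgen _ hs0card
  have hmem : ∀ i : Fin (d + 1), (i.castSucc : Fin (d + 2)) ∈ Finset.univ.erase l := by
    intro i
    simp [Finset.mem_erase, hl, (Fin.castSucc_lt_last i).ne]
  have li : LinearIndependent F (fun i : Fin (d + 1) => v i.castSucc) := by
    have := li0.comp (fun i : Fin (d + 1) =>
        (⟨i.castSucc, hmem i⟩ : ((Finset.univ.erase l : Finset (Fin (d+2))) : Set _)))
      (fun i j hij => Fin.castSucc_injective _ (by simpa using congrArg Subtype.val hij))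
    exact this
  have hfr : Fintype.card (Fin (d + 1)) = Module.finrank F (Fin (d + 1) → F) := by
    simp
  let b := basisOfLinearIndependentOfCardEqFinrank li hfr
  have hb : ∀ i, b i = v i.castSucc := fun i => by
    simp [b, coe_basisOfLinearIndependentOfCardEqFinrank]
  refine ⟨b, hb, ?_⟩
  intro k hk
  have hs'card : ((Finset.univ : Finset (Fin (d + 2))).erase k.castSucc).card = d + 1 := by
    rw [Finset.card_erase_of_mem (Finset.mem_univ _), hcardU]; omega
  have li' := hgen _ hs'card
  have hlmem : l ∈ Finset.univ.erase k.castSucc := by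
    simp [Finset.mem_erase, hl]
    exact (Fin.castSucc_lt_last k).ne'
  set i0 : ((Finset.univ.erase k.castSucc : Finset (Fin (d+2))) : Set (Fin (d+2))) :=
    ⟨l, hlmem⟩ with hi0
  have hnot := li'.notMem_span_image (x := i0) (s := ({i0}ᶜ : Set _)) (by simp)
  apply hnot
  have hsum : v l = ∑ i ∈ Finset.univ.erase k, b.repr (v l) i • v i.castSucc := by
    conv_lhs => rw [← b.sum_repr (v l)]
    rw [← Finset.sum_erase_add _ _ (Finset.mem_univ k), hk]
    simp only [zero_smul, add_zero]
    exact Finset.sum_congr rfl fun i _ => by rw [hb]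
  rw [hsum]
  apply Submodule.sum_mem
  intro i hi
  apply Submodule.smul_mem
  apply Submodule.subset_span
  have hine : i ≠ k := (Finset.mem_erase.mp hi).1
  have hne2 : (i.castSucc : Fin (d + 2)) ≠ k.castSucc :=
    fun h => hine (Fin.castSucc_injective _ h)
  have hmem' : (i.castSucc : Fin (d + 2)) ∈ Finset.univ.erase k.castSucc := by
    simp [Finset.mem_erase, hne2]
  refine ⟨⟨i.castSucc, hmem'⟩, ?_, rfl⟩
  simp only [Set.mem_compl_iff, Set.mem_singleton_iff, hi0]
  intro h
  exact (Fin.castSucc_lt_last i).ne (congrArg Subtype.val h)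

lemma geiser_row_entry {n m : ℕ} (A : Matrix (Fin 1) (Fin n) F)
    (M : Matrix (Fin n) (Fin n) F) (K : Matrix (Fin n) (Fin m) F) (j : Fin m) :
    (A * M * K) 0 j = (A 0 ᵥ* M) ⬝ᵥ (fun rr => K rr j) := by
  simp only [Matrix.mul_apply, vecMul, dotProduct, Finset.sum_mul, Finset.mul_sum]

lemma geiser_vecMul_smul_mat {n : ℕ} (v : Fin n → F) (A : Matrix (Fin n) (Fin n) F) (c : F) :
    v ᵥ* (c • A) = c • (v ᵥ* A) := by
  funext j
  simp [vecMul, dotProduct, Finset.mul_sum]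
  exact Finset.sum_congr rfl fun i _ => by ring

end GeiserAux

/-- With `Qᵢ, Rᵢ` two tuples of `d+2` nonzero row vectors in general position
(every `d+1` linearly independent) and `K_{Rᵢ}` matrices whose columns form a basis of
`ker Rᵢ`, the `d(d+2)` linear conditions `Qᵢ · M · K_{Rᵢ} = 0` on
`M ∈ Mat_{(d+1)×(d+1)}(F)` are independent: the map
`M ↦ (Q₁ M K_{R₁}, …, Q_{d+2} M K_{R_{d+2}})` is surjective and its kernel has
dimension `(d+1)² − d(d+2) = 1`. -/
theorem geiser_linear_system_independent_conditions
    (F : Type*) [Field F] (d : ℕ) (hd : 1 ≤ d)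
    (Q R : Fin (d + 2) → Matrix (Fin 1) (Fin (d + 1)) F)
    (hQ0 : ∀ i, Q i ≠ 0) (hR0 : ∀ i, R i ≠ 0)
    (hQgen : ∀ s : Finset (Fin (d + 2)), s.card = d + 1 →
      LinearIndependent F (fun i : s => Q (i : Fin (d + 2))))
    (hRgen : ∀ s : Finset (Fin (d + 2)), s.card = d + 1 →
      LinearIndependent F (fun i : s => R (i : Fin (d + 2))))
    (KR : Fin (d + 2) → Matrix (Fin (d + 1)) (Fin d) F)
    (hKR_li : ∀ i, LinearIndependent F
      (fun j : Fin d => fun r : Fin (d + 1) => KR i r j))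
    (hKR_span : ∀ i,
      Submodule.span F (Set.range (fun j : Fin d => fun r : Fin (d + 1) => KR i r j)) =
        LinearMap.ker (R i).mulVecLin) :
    Function.Surjective
      (fun M : Matrix (Fin (d + 1)) (Fin (d + 1)) F =>
        fun i : Fin (d + 2) => Q i * M * KR i) ∧
    ∃ W : Submodule F (Matrix (Fin (d + 1)) (Fin (d + 1)) F),
      (W : Set (Matrix (Fin (d + 1)) (Fin (d + 1)) F)) =
          {M : Matrix (Fin (d + 1)) (Fin (d + 1)) F | ∀ i, Q i * M * KR i = 0} ∧
      Module.finrank F W = 1 := by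
  classical
  set q : Fin (d + 2) → (Fin (d + 1) → F) := fun i => Q i 0 with hqdef
  set r : Fin (d + 2) → (Fin (d + 1) → F) := fun i => R i 0 with hrdef
  -- projection to first row is injective linear map
  let proj : Matrix (Fin 1) (Fin (d + 1)) F →ₗ[F] (Fin (d + 1) → F) :=
    { toFun := fun M => M 0
      map_add' := fun M N => rfl
      map_smul' := fun c M => rfl }
  have hprojker : LinearMap.ker proj = ⊥ := by
    rw [LinearMap.ker_eq_bot']
    intro M hM
    ext a b
    have ha : a = 0 := Subsingleton.elim a 0
    subst ha
    exact congrFun hM b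
  have hqgen : ∀ s : Finset (Fin (d + 2)), s.card = d + 1 →
      LinearIndependent F (fun i : s => q (i : Fin (d + 2))) := by
    intro s hs
    exact (hQgen s hs).map' proj hprojker
  have hrgen : ∀ s : Finset (Fin (d + 2)), s.card = d + 1 →
      LinearIndependent F (fun i : s => r (i : Fin (d + 2))) := by
    intro s hs
    exact (hRgen s hs).map' proj hprojker
  have hr0 : ∀ i, r i ≠ 0 := by
    intro i h
    apply hR0 i
    ext a b
    have ha : a = 0 := Subsingleton.elim a 0
    subst ha
    exact congrFun h b
  -- kernel of R i as dot product condition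
  have hker : ∀ i (w : Fin (d + 1) → F),
      w ∈ LinearMap.ker (R i).mulVecLin ↔ r i ⬝ᵥ w = 0 := by
    intro i w
    rw [LinearMap.mem_ker, mulVecLin_apply]
    constructor
    · intro h; exact congrFun h 0
    · intro h; funext a
      have ha : a = 0 := Subsingleton.elim a 0
      subst ha
      exact h
  -- columns of KR i lie in the kernel of R i
  have hcols : ∀ i j, r i ⬝ᵥ (fun rr => KR i rr j) = 0 := by
    intro i j
    rw [← hker i]
    rw [← hKR_span i]
    exact Submodule.subset_span ⟨j, rfl⟩
  -- key characterization of the conditions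
  have key : ∀ (M : Matrix (Fin (d + 1)) (Fin (d + 1)) F) (i : Fin (d + 2)),
      Q i * M * KR i = 0 ↔ ∃ c : F, (q i) ᵥ* M = c • r i := by
    intro M i
    constructor
    · intro h0
      apply geiser_dot_factor (r i) (q i ᵥ* M) (hr0 i)
      intro w hw
      -- w ∈ ker = span of columns; the functional `a ⬝ᵥ ·` vanishes on columns
      have hwker : w ∈ LinearMap.ker (R i).mulVecLin := (hker i w).mpr hw
      rw [← hKR_span i] at hwker
      set φ : (Fin (d + 1) → F) →ₗ[F] F :=
        { toFun := fun u => (q i ᵥ* M) ⬝ᵥ u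
          map_add' := fun u v => dotProduct_add _ _ _
          map_smul' := fun c u => by simp } with hφ
      have hφcols : Submodule.span F
          (Set.range (fun j : Fin d => fun rr : Fin (d + 1) => KR i rr j)) ≤
          LinearMap.ker φ := by
        rw [Submodule.span_le]
        rintro _ ⟨j, rfl⟩
        have := geiser_row_entry (Q i) M (KR i) j
        rw [h0] at this
        simp only [Matrix.zero_apply] at this
        simpa [φ, LinearMap.mem_ker] using this.symm
      exact hφcols hwker
    · rintro ⟨c, hc⟩
      ext a j
      have ha : a = 0 := Subsingleton.elim a 0
      subst ha
      rw [geiser_row_entry (Q i) M (KR i) j, hc]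
      simp [smul_dotProduct, hcols i j]
  -- bases adapted to the two configurations
  obtain ⟨bq, hbq, haa⟩ := geiser_gen_pos_basis q hqgen
  obtain ⟨br, hbr, hbb⟩ := geiser_gen_pos_basis r hrgen
  set l : Fin (d + 2) := Fin.last (d + 1) with hl
  set aa : Fin (d + 1) → F := fun i => bq.repr (q l) i with haadef
  set bb : Fin (d + 1) → F := fun i => br.repr (r l) i with hbbdef
  -- the special matrix M0
  set f : (Fin (d + 1) → F) →ₗ[F] (Fin (d + 1) → F) :=
    (bq.constr F) (fun i => (bb i / aa i) • r i.castSucc) with hfdef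
  set M0 : Matrix (Fin (d + 1)) (Fin (d + 1)) F := (LinearMap.toMatrix' f)ᵀ with hM0def
  have hM0v : ∀ v : Fin (d + 1) → F, v ᵥ* M0 = f v := by
    intro v
    rw [hM0def, vecMul_transpose, ← Matrix.toLin'_apply, Matrix.toLin'_toMatrix']
  have hM0cs : ∀ i : Fin (d + 1), q i.castSucc ᵥ* M0 = (bb i / aa i) • r i.castSucc := by
    intro i
    rw [hM0v, ← hbq i, hfdef, Module.Basis.constr_basis]
  have hM0last : q l ᵥ* M0 = r l := by
    rw [hM0v]
    conv_lhs => rw [← bq.sum_repr (q l)]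
    rw [map_sum]
    have step : ∀ i : Fin (d + 1),
        f (bq.repr (q l) i • bq i) = bb i • r i.castSucc := by
      intro i
      rw [_root_.map_smul, hfdef, Module.Basis.constr_basis, smul_smul]
      congr 1
      rw [mul_comm, div_mul_cancel₀ _ (haa i)]
    rw [Finset.sum_congr rfl (fun i _ => step i)]
    conv_rhs => rw [← br.sum_repr (r l)]
    exact Finset.sum_congr rfl fun i _ => by rw [hbr, hbbdef]
  set μ : Fin (d + 2) → F :=
    fun i => Fin.lastCases (motive := fun _ => F) 1 (fun j => bb j / aa j) i with hμdef
  have hμcs : ∀ i : Fin (d + 1), μ i.castSucc = bb i / aa i := by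
    intro i; simp [hμdef]
  have hμl : μ l = 1 := by simp [hμdef, hl]
  have hμ0 : ∀ i, μ i ≠ 0 := by
    intro i
    refine Fin.lastCases ?_ ?_ i
    · rw [hμl]; exact one_ne_zero
    · intro j; rw [hμcs]; exact div_ne_zero (hbb j) (haa j)
  have hM0 : ∀ i, q i ᵥ* M0 = μ i • r i := by
    intro i
    refine Fin.lastCases ?_ ?_ i
    · rw [hM0last, hμl, one_smul]
    · intro j; rw [hM0cs, hμcs]
  have hM0ne : M0 ≠ 0 := by
    intro h
    apply hr0 l
    rw [← hM0last, h, Matrix.vecMul_zero]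
  -- the linear map given by all the conditions
  set Φ : Matrix (Fin (d + 1)) (Fin (d + 1)) F →ₗ[F]
      (Fin (d + 2) → Matrix (Fin 1) (Fin d) F) :=
    { toFun := fun M => fun i => Q i * M * KR i
      map_add' := fun M N => by
        funext i
        simp [Matrix.mul_add, Matrix.add_mul]
      map_smul' := fun c M => by
        funext i
        simp [Matrix.mul_smul, Matrix.smul_mul] } with hΦdef
  have hΦmem : ∀ M, M ∈ LinearMap.ker Φ ↔ ∀ i, Q i * M * KR i = 0 := by
    intro M
    rw [LinearMap.mem_ker]
    constructor
    · intro h i; exact congrFun h i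
    · intro h; funext i; exact h i
  -- kernel of Φ is the span of M0
  have hkerΦ : LinearMap.ker Φ = Submodule.span F {M0} := by
    apply le_antisymm
    · intro M hM
      rw [hΦmem] at hM
      choose lam hlam using fun i => (key M i).mp (hM i)
      -- compare the two expressions for q l ᵥ* M in the basis br
      have h2 : q l ᵥ* M = ∑ i : Fin (d + 1), (aa i * lam i.castSucc) • br i := by
        have : q l = ∑ i : Fin (d + 1), aa i • q i.castSucc := by
          conv_lhs => rw [← bq.sum_repr (q l)]
          exact Finset.sum_congr rfl fun i _ => by rw [hbq, haadef]
        rw [this]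
        rw [show (∑ i : Fin (d + 1), aa i • q i.castSucc) ᵥ* M =
            ∑ i : Fin (d + 1), (aa i • q i.castSucc) ᵥ* M from
          map_sum M.vecMulLinear _ _]
        refine Finset.sum_congr rfl fun i _ => ?_
        rw [Matrix.smul_vecMul, hlam i.castSucc, hbr, smul_smul]
      have h1 : q l ᵥ* M = ∑ i : Fin (d + 1), (lam l * bb i) • br i := by
        rw [hlam l]
        conv_lhs => rw [show r l = ∑ i : Fin (d + 1), bb i • br i from
          (br.sum_repr (r l)).symm]
        rw [Finset.smul_sum]
        exact Finset.sum_congr rfl fun i _ => by rw [smul_smul]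
      have hcoeff : ∀ i : Fin (d + 1), aa i * lam i.castSucc = lam l * bb i := by
        have hdiff : ∑ i : Fin (d + 1),
            (aa i * lam i.castSucc - lam l * bb i) • br i = 0 := by
          have e0 := h2.symm.trans h1
          rw [Finset.sum_congr rfl (fun i _ => sub_smul
            (aa i * lam i.castSucc) (lam l * bb i) (br i)), Finset.sum_sub_distrib, e0,
            sub_self]
        intro i
        have := Fintype.linearIndependent_iff.mp br.linearIndependent
          (fun i => aa i * lam i.castSucc - lam l * bb i) hdiff i
        exact sub_eq_zero.mp this
      have hlamcs : ∀ i : Fin (d + 1), lam i.castSucc = lam l * μ i.castSucc := by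
        intro i
        rw [hμcs]
        have hinv := inv_mul_cancel₀ (haa i)
        calc lam i.castSucc = (aa i)⁻¹ * (aa i * lam i.castSucc) := by
              rw [← mul_assoc, hinv, one_mul]
          _ = (aa i)⁻¹ * (lam l * bb i) := by rw [hcoeff i]
          _ = lam l * (bb i / aa i) := by ring
      -- M - lam l • M0 kills the whole basis bq, hence is 0
      set X : Matrix (Fin (d + 1)) (Fin (d + 1)) F := M - lam l • M0 with hXdef
      have hXb : ∀ i : Fin (d + 1), bq i ᵥ* X = 0 := by
        intro i
        rw [hXdef, Matrix.vecMul_sub, geiser_vecMul_smul_mat, hbq,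
          hlam i.castSucc, hM0 i.castSucc, hlamcs i, smul_smul, sub_self]
      have hXall : ∀ v : Fin (d + 1) → F, v ᵥ* X = 0 := by
        intro v
        conv_lhs => rw [show v = ∑ i : Fin (d + 1), bq.repr v i • bq i from
          (bq.sum_repr v).symm]
        rw [show (∑ i : Fin (d + 1), bq.repr v i • bq i) ᵥ* X =
            ∑ i : Fin (d + 1), (bq.repr v i • bq i) ᵥ* X from
          map_sum X.vecMulLinear _ _]
        refine Finset.sum_eq_zero fun i _ => ?_
        rw [Matrix.smul_vecMul, hXb, smul_zero]
      have hX0 : X = 0 := by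
        ext k j
        have h5 := congrFun (hXall (Pi.single k 1)) j
        simpa [Matrix.single_vecMul] using h5
      have : M = lam l • M0 := by
        rw [← sub_eq_zero]; exact hX0
      rw [this]
      exact Submodule.smul_mem _ _ (Submodule.mem_span_singleton_self M0)
    · rw [Submodule.span_le, Set.singleton_subset_iff]
      rw [SetLike.mem_coe, hΦmem]
      intro i
      exact (key M0 i).mpr ⟨μ i, hM0 i⟩
  -- dimension bookkeeping
  have hdom : Module.finrank F (Matrix (Fin (d + 1)) (Fin (d + 1)) F) =
      (d + 1) * (d + 1) := by
    rw [Module.finrank_matrix]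
    simp
  have hcod : Module.finrank F (Fin (d + 2) → Matrix (Fin 1) (Fin d) F) =
      (d + 2) * d := by
    rw [Module.finrank_pi_fintype]
    simp [Module.finrank_matrix]
  have hkerrank : Module.finrank F (LinearMap.ker Φ) = 1 := by
    rw [hkerΦ]
    exact finrank_span_singleton hM0ne
  have hrange : LinearMap.range Φ = ⊤ := by
    apply Submodule.eq_top_of_finrank_eq
    have hrn := LinearMap.finrank_range_add_finrank_ker Φ
    rw [hkerrank, hdom] at hrn
    rw [hcod]
    have e : (d + 1) * (d + 1) = (d + 2) * d + 1 := by ring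
    omega
  constructor
  · exact LinearMap.range_eq_top.mp hrange
  · refine ⟨LinearMap.ker Φ, ?_, hkerrank⟩
    ext M
    rw [SetLike.mem_coe, hΦmem]
    rfl
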